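/- Let (g, [−,−], ω) be a symplectic Lie algebra, i.e. ω is a nondegenerate skew-symmetric bilinear form with ω([x,y],z) + ω([y,z],x) + ω([z,x],y) = 0. Then the product x·y defined by ω(x·y, z) = −ω(y, [x,z]) is a pre-Lie algebra structure on g whose commutator recovers the Lie bracket: x·y − y·x = [x,y]. -/
import Mathlib


/-- The pre-Lie identity for a multiplication on an additive group. -/
def IsPreLieMul {A : Type*} [AddCommGroup A] (f : A → A → A) : Prop :=
  ∀ x y z : A, f (f x y) z - f x (f y z) = f (f y x) z - f y (f x z)

/-- Let `(g, [−,−], ω)` be a symplectic Lie algebra (`ω`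
nondegenerate skew-symmetric with
`ω([x,y],z) + ω([y,z],x) + ω([z,x],y) = 0`).  Then the product `x·y` defined
by `ω(x·y, z) = −ω(y, [x,z])` is a pre-Lie structure on `g` whose commutator
recovers the Lie bracket: `x·y − y·x = [x,y]`. -/
theorem symplectic_compatible_preLie
    {𝕜 G : Type*} [Field 𝕜] [CharZero 𝕜] [AddCommGroup G] [Module 𝕜 G]
    [FiniteDimensional 𝕜 G]
    (br : G →ₗ[𝕜] G →ₗ[𝕜] G)
    (hskew : ∀ x y : G, br x y = -br y x)
    (hjac : ∀ x y z : G, br (br x y) z + br (br y z) x + br (br z x) y = 0)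
    (ω : G →ₗ[𝕜] G →ₗ[𝕜] 𝕜)
    (hωskew : ∀ x y : G, ω x y = -ω y x)
    (hωnd : ∀ x : G, (∀ y : G, ω x y = 0) → x = 0)
    (hωcoc : ∀ x y z : G, ω (br x y) z + ω (br y z) x + ω (br z x) y = 0)
    (m : G →ₗ[𝕜] G →ₗ[𝕜] G)
    (hdef : ∀ x y z : G, ω (m x y) z = -ω y (br x z)) :
    IsPreLieMul (fun x y : G => m x y) ∧
      ∀ x y : G, m x y - m y x = br x y := by
  have hcomm : ∀ x y : G, m x y - m y x = br x y := by
    intro x y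
    have h : m x y - m y x - br x y = 0 := by
      apply hωnd
      intro z
      have hc := hωcoc x y z
      have h1 : ω (br z x) y = -ω (br x z) y := by
        rw [hskew z x, map_neg, LinearMap.neg_apply]
      have h2 : ω x (br y z) = -ω (br y z) x := hωskew _ _
      have h3 : ω y (br x z) = -ω (br x z) y := hωskew _ _
      have h4 : ω (br x z) y = -ω y (br x z) := hωskew _ _
      simp only [map_sub, LinearMap.sub_apply, hdef x y z, hdef y x z]
      linear_combination -h3 + h2 - hc + h1
    exact sub_eq_zero.mp h
  refine ⟨?_, hcomm⟩
  intro x y z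
  simp only
  have hJ : ∀ w : G, br (br x y) w = br x (br y w) - br y (br x w) := by
    intro w
    have hj := hjac x y w
    have e1 : br (br y w) x = -br x (br y w) := hskew _ _
    have e2 : br (br w x) y = br y (br x w) := by
      rw [hskew w x, map_neg, LinearMap.neg_apply, hskew y (br x w)]
    rw [e1, e2] at hj
    linear_combination (norm := abel) hj
  have hM : m x y = br x y + m y x := by
    rw [← hcomm x y]; abel
  have h : (m (m x y) z - m x (m y z)) - (m (m y x) z - m y (m x z)) = 0 := by
    apply hωnd
    intro w
    have t1 : ω (m (m x y) z) w = -ω z (br (m x y) w) := hdef _ _ _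
    have t2 : ω (m x (m y z)) w = -ω (m y z) (br x w) := hdef _ _ _
    have t2' : ω (m y z) (br x w) = -ω z (br y (br x w)) := hdef _ _ _
    have t3 : ω (m (m y x) z) w = -ω z (br (m y x) w) := hdef _ _ _
    have t4 : ω (m y (m x z)) w = -ω (m x z) (br y w) := hdef _ _ _
    have t4' : ω (m x z) (br y w) = -ω z (br x (br y w)) := hdef _ _ _
    have tM : ω z (br (m x y) w) =
        ω z (br (br x y) w) + ω z (br (m y x) w) := by
      rw [hM]
      simp [map_add]
    have tJ : ω z (br (br x y) w) =
        ω z (br x (br y w)) - ω z (br y (br x w)) := by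
      rw [hJ w]
      simp [map_sub]
    simp only [map_sub, LinearMap.sub_apply, t1, t2, t3, t4]
    rw [t2', t4', tM, tJ]
    ring
  exact sub_eq_zero.mp h
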